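/- arXiv:math/0608357 — 2 statements merged into one kernel-verified Lean document; each statement's English description precedes it below -/
import Mathlib

section
/- Let X₁, X₂, … be i.i.d. integer-valued random variables with |Xᵢ| ≤ 1 and E[X₁] > 0, and let S(n) = X₁ + ⋯ + Xₙ. Then the probability α that S(n) > 0 for all n ≥ 1 is strictly positive, and ∑_{m=0}^∞ P[S(m) = L] = 1/α for every L ∈ ℕ, where S(0) = 0. -/
open MeasureTheory ProbabilityTheory Filter Set


lemma tuple_law {Ω : Type*} [MeasurableSpace Ω] {μ : Measure Ω} [IsProbabilityMeasure μ]
    {X : ℕ → Ω → ℤ} (hmeas : ∀ i, Measurable (X i))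
    (hindep : iIndepFun X μ)
    (hident : ∀ i, IdentDistrib (X i) (X 0) μ μ) (m K : ℕ) :
    Measure.map (fun ω (j : Fin K) => X (m + (j : ℕ)) ω) μ
      = Measure.pi (fun _ : Fin K => Measure.map (X 0) μ) := by
  haveI : IsProbabilityMeasure (Measure.map (X 0) μ) :=
    Measure.isProbabilityMeasure_map (hmeas 0).aemeasurable
  have hT : Measurable (fun ω (j : Fin K) => X (m + (j : ℕ)) ω) :=
    measurable_pi_lambda _ fun j => hmeas _
  refine (Measure.pi_eq fun s hs => ?_).symm
  rw [Measure.map_apply hT (MeasurableSet.univ_pi hs)]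
  set sets : ℕ → Set ℤ := fun i => if h : m ≤ i ∧ i - m < K then s ⟨i - m, h.2⟩ else Set.univ
    with hsets
  have hkey : ∀ j : Fin K, sets (m + (j:ℕ)) = s j := by
    intro j
    have h1 : m ≤ m + (j:ℕ) ∧ m + (j:ℕ) - m < K := by
      refine ⟨Nat.le_add_right _ _, ?_⟩
      simpa [Nat.add_sub_cancel_left] using j.2
    simp only [hsets, dif_pos h1]
    congr 1
    ext
    simp [Nat.add_sub_cancel_left]
  have hpre : (fun ω (j : Fin K) => X (m + (j:ℕ)) ω) ⁻¹' (Set.pi Set.univ s)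
      = ⋂ i ∈ Finset.image (fun j : Fin K => m + (j:ℕ)) Finset.univ, X i ⁻¹' sets i := by
    ext ω
    simp only [Set.mem_preimage, Set.mem_pi, Set.mem_univ, forall_true_left, Set.mem_iInter,
      Finset.mem_image, Finset.mem_univ, true_and]
    constructor
    · rintro h i ⟨j, rfl⟩
      rw [hkey j]; exact h j
    · intro h j
      have := h (m + (j:ℕ)) ⟨j, rfl⟩
      rwa [hkey j] at this
  rw [hpre, hindep.measure_inter_preimage_eq_mul _ (fun i _ => by
    simp only [hsets]; split_ifs; exacts [hs _, MeasurableSet.univ])]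
  rw [Finset.prod_image (fun a _ b _ hab => Fin.ext (Nat.add_left_cancel hab))]
  refine Finset.prod_congr rfl fun j _ => ?_
  rw [hkey j, ← Measure.map_apply (hmeas _) (hs j), (hident _).map_eq]

lemma shift_prob {Ω : Type*} [MeasurableSpace Ω] {μ : Measure Ω} [IsProbabilityMeasure μ]
    {X : ℕ → Ω → ℤ} (hmeas : ∀ i, Measurable (X i))
    (hindep : iIndepFun X μ)
    (hident : ∀ i, IdentDistrib (X i) (X 0) μ μ) (m : ℕ) :
    μ {ω | ∀ k, 1 ≤ k → 0 < ∑ i ∈ Finset.range k, X (m + i) ω}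
      = μ {ω | ∀ k, 1 ≤ k → 0 < ∑ i ∈ Finset.range k, X i ω} := by
  classical
  set D : ℕ → Set (ℕ → ℤ) :=
    fun K => {u : ℕ → ℤ | ∀ k, 1 ≤ k → k ≤ K → 0 < ∑ i ∈ Finset.range k, u i} with hD
  set φ : ∀ K : ℕ, (Fin K → ℤ) → (ℕ → ℤ) :=
    fun K v i => if h : i < K then v ⟨i, h⟩ else 0 with hφdef
  have hDmeas : ∀ K, MeasurableSet (D K) := by
    intro K
    have : D K = ⋂ k, ⋂ (_ : 1 ≤ k), ⋂ (_ : k ≤ K),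
        (fun u : ℕ → ℤ => ∑ i ∈ Finset.range k, u i) ⁻¹' {x | 0 < x} := by
      ext u; simp [hD, Set.mem_iInter]
    rw [this]
    refine MeasurableSet.iInter fun k => MeasurableSet.iInter fun _ =>
      MeasurableSet.iInter fun _ => ?_
    exact (Finset.measurable_sum _ fun i _ => measurable_pi_apply i)
      (Set.to_countable _).measurableSet
  have hφmeas : ∀ K, Measurable (φ K) := by
    intro K
    refine measurable_pi_lambda _ fun i => ?_
    by_cases h : i < K
    · simp only [hφdef, dif_pos h]; exact measurable_pi_apply _
    · simp only [hφdef, dif_neg h]; exact measurable_const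
  have hfin : ∀ (m' K : ℕ),
      {ω | ∀ k, 1 ≤ k → k ≤ K → 0 < ∑ i ∈ Finset.range k, X (m' + i) ω}
        = (fun ω (j : Fin K) => X (m' + (j:ℕ)) ω) ⁻¹' ((φ K) ⁻¹' (D K)) := by
    intro m' K
    ext ω
    simp only [Set.mem_preimage, Set.mem_setOf_eq, hD, hφdef]
    have hsum : ∀ k, k ≤ K →
        (∑ i ∈ Finset.range k, if h : i < K then X (m' + i) ω else 0)
          = ∑ i ∈ Finset.range k, X (m' + i) ω := by
      intro k hk
      refine Finset.sum_congr rfl fun i hi => ?_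
      rw [dif_pos (lt_of_lt_of_le (Finset.mem_range.1 hi) hk)]
    constructor
    · intro h k hk1 hkK
      rw [hsum k hkK]
      exact h k hk1 hkK
    · intro h k hk1 hkK
      have := h k hk1 hkK
      rwa [hsum k hkK] at this
  have hfinmeq : ∀ K : ℕ,
      μ {ω | ∀ k, 1 ≤ k → k ≤ K → 0 < ∑ i ∈ Finset.range k, X (m + i) ω}
        = μ {ω | ∀ k, 1 ≤ k → k ≤ K → 0 < ∑ i ∈ Finset.range k, X (0 + i) ω} := by
    intro K
    have hTm : Measurable (fun ω (j : Fin K) => X (m + (j:ℕ)) ω) :=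
      measurable_pi_lambda _ fun j => hmeas _
    have hT0 : Measurable (fun ω (j : Fin K) => X (0 + (j:ℕ)) ω) :=
      measurable_pi_lambda _ fun j => hmeas _
    rw [hfin m K, hfin 0 K,
      ← Measure.map_apply hTm ((hφmeas K) (hDmeas K)),
      ← Measure.map_apply hT0 ((hφmeas K) (hDmeas K)),
      tuple_law hmeas hindep hident m K, tuple_law hmeas hindep hident 0 K]
  have hiInter : ∀ m', {ω | ∀ k, 1 ≤ k → 0 < ∑ i ∈ Finset.range k, X (m' + i) ω}
      = ⋂ K, {ω | ∀ k, 1 ≤ k → k ≤ K → 0 < ∑ i ∈ Finset.range k, X (m' + i) ω} := by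
    intro m'
    ext ω
    simp only [Set.mem_setOf_eq, Set.mem_iInter]
    exact ⟨fun h K k hk1 _ => h k hk1, fun h k hk1 => h k k hk1 le_rfl⟩
  have hanti : ∀ m', Antitone (fun K =>
      {ω | ∀ k, 1 ≤ k → k ≤ K → 0 < ∑ i ∈ Finset.range k, X (m' + i) ω}) := by
    intro m' K K' hKK' ω hω k hk1 hkK
    exact hω k hk1 (le_trans hkK hKK')
  have hmeasev : ∀ m' K, NullMeasurableSet
      {ω | ∀ k, 1 ≤ k → k ≤ K → 0 < ∑ i ∈ Finset.range k, X (m' + i) ω} μ := by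
    intro m' K
    rw [hfin m' K]
    have hTm' : Measurable (fun ω (j : Fin K) => X (m' + (j:ℕ)) ω) :=
      measurable_pi_lambda _ fun j => hmeas _
    exact (hTm' ((hφmeas K) (hDmeas K))).nullMeasurableSet
  have key : ∀ m', μ {ω | ∀ k, 1 ≤ k → 0 < ∑ i ∈ Finset.range k, X (m' + i) ω}
      = ⨅ K, μ {ω | ∀ k, 1 ≤ k → k ≤ K → 0 < ∑ i ∈ Finset.range k, X (m' + i) ω} := by
    intro m'
    rw [hiInter m']
    exact (hanti m').measure_iInter (hmeasev m') ⟨0, measure_ne_top μ _⟩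
  rw [key m]
  have : μ {ω | ∀ k, 1 ≤ k → 0 < ∑ i ∈ Finset.range k, X i ω}
      = μ {ω | ∀ k, 1 ≤ k → 0 < ∑ i ∈ Finset.range k, X (0 + i) ω} := by
    simp only [Nat.zero_add]
  rw [this, key 0]
  exact iInf_congr hfinmeq

lemma drift_tendsto {Ω : Type*} [MeasurableSpace Ω] {μ : Measure Ω} [IsProbabilityMeasure μ]
    {X : ℕ → Ω → ℤ} (hmeas : ∀ i, Measurable (X i))
    (hindep : iIndepFun X μ)
    (hident : ∀ i, IdentDistrib (X i) (X 0) μ μ)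
    (hbdd : ∀ i ω, |X i ω| ≤ 1)
    (hdrift : 0 < ∫ ω, ((X 0 ω : ℝ)) ∂μ) :
    ∀ᵐ ω ∂μ, Tendsto (fun n => ∑ i ∈ Finset.range n, X i ω) atTop atTop := by
  have hcast : Measurable (fun z : ℤ => (z : ℝ)) := measurable_from_top
  have hint : Integrable (fun ω => (X 0 ω : ℝ)) μ := by
    refine (integrable_const (1:ℝ)).mono' (hcast.comp (hmeas 0)).aestronglyMeasurable ?_
    refine Filter.Eventually.of_forall fun ω => ?_
    rw [Real.norm_eq_abs, ← Int.cast_abs]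
    exact_mod_cast hbdd 0 ω
  have hpind : Pairwise (Function.onFun (IndepFun · · μ) (fun i ω => (X i ω : ℝ))) := by
    intro i j hij
    exact (hindep.indepFun hij).comp hcast hcast
  have hpid : ∀ i, IdentDistrib (fun ω => (X i ω : ℝ)) (fun ω => (X 0 ω : ℝ)) μ μ :=
    fun i => (hident i).comp hcast
  have hsl := strong_law_ae_real _ hint hpind hpid
  filter_upwards [hsl] with ω hω
  rw [← tendsto_intCast_atTop_iff (R := ℝ)]
  set c : ℝ := ∫ ω, ((X 0 ω : ℝ)) ∂μ with hc
  have hev : ∀ᶠ n : ℕ in atTop, c / 2 < (∑ i ∈ Finset.range n, (X i ω : ℝ)) / n :=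
    (tendsto_order.1 hω).1 (c / 2) (by linarith)
  have h1 : ∀ᶠ n : ℕ in atTop,
      (c / 2) * n ≤ ((∑ i ∈ Finset.range n, X i ω : ℤ) : ℝ) := by
    filter_upwards [hev, eventually_ge_atTop 1] with n hn hn1
    have hnpos : (0 : ℝ) < n := by positivity
    have := (le_div_iff₀ hnpos).1 hn.le
    push_cast
    linarith
  exact tendsto_atTop_mono' atTop h1
    (Tendsto.const_mul_atTop (half_pos hdrift) tendsto_natCast_atTop_atTop)

theorem renewal_visits_eq_inv_alpha
    {Ω : Type*} [MeasurableSpace Ω] (μ : Measure Ω) [IsProbabilityMeasure μ]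
    (X : ℕ → Ω → ℤ)
    (hmeas : ∀ i, Measurable (X i))
    (hindep : iIndepFun X μ)
    (hident : ∀ i, IdentDistrib (X i) (X 0) μ μ)
    (hbdd : ∀ i ω, |X i ω| ≤ 1)
    (hdrift : 0 < ∫ ω, ((X 0 ω : ℝ)) ∂μ)
    (α : ENNReal)
    (hα : α = μ {ω | ∀ n : ℕ, 1 ≤ n → 0 < ∑ i ∈ Finset.range n, X i ω}) :
    0 < α ∧
      ∀ L : ℕ, ∑' m : ℕ, μ {ω | ∑ i ∈ Finset.range m, X i ω = (L : ℤ)} = α⁻¹ := by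
  classical
  -- notation
  set S : ℕ → Ω → ℤ := fun n ω => ∑ i ∈ Finset.range n, X i ω with hS
  -- key identity: for every L, (∑' m, μ (A L m)) * α = 1
  have key : ∀ L : ℕ,
      (∑' m : ℕ, μ {ω | S m ω = (L : ℤ)}) * α = 1 := by
    intro L
    set A : ℕ → Set Ω := fun m => {ω | S m ω = (L : ℤ)} with hA
    set B : ℕ → Set Ω :=
      fun m => {ω | ∀ k, 1 ≤ k → 0 < ∑ i ∈ Finset.range k, X (m + i) ω} with hB
    set E : ℕ → Set Ω :=
      fun m => {ω | S m ω = (L : ℤ) ∧ ∀ n, m < n → (L : ℤ) < S n ω} with hE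
    -- B has measure α
    have hαB : ∀ m, μ (B m) = α := fun m =>
      (shift_prob hmeas hindep hident m).trans hα.symm
    -- E m = A m ∩ B m
    have hEAB : ∀ m, E m = A m ∩ B m := by
      intro m
      ext ω
      simp only [hE, hA, hB, Set.mem_setOf_eq, Set.mem_inter_iff]
      constructor
      · rintro ⟨hL, hgt⟩
        refine ⟨hL, fun k hk1 => ?_⟩
        have h2 := hgt (m + k) (by omega)
        simp only [hS] at h2 hL
        rw [Finset.sum_range_add, hL] at h2
        linarith
      · rintro ⟨hL, hBm⟩
        refine ⟨hL, fun n hn => ?_⟩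
        obtain ⟨k, rfl⟩ : ∃ k, n = m + k := ⟨n - m, by omega⟩
        have hk1 : 1 ≤ k := by omega
        have h2 := hBm k hk1
        simp only [hS] at hL ⊢
        rw [Finset.sum_range_add, hL]
        linarith
    -- independence: μ (A m ∩ B m) = μ (A m) * μ (B m)
    have hprod : ∀ m, μ (A m ∩ B m) = μ (A m) * μ (B m) := by
      intro m
      set M₁ : MeasurableSpace Ω :=
        ⨆ i ∈ {i : ℕ | i < m}, MeasurableSpace.comap (X i) inferInstance with hM₁
      set M₂ : MeasurableSpace Ω :=
        ⨆ i ∈ {i : ℕ | m ≤ i}, MeasurableSpace.comap (X i) inferInstance with hM₂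
      have hdisj : Disjoint {i : ℕ | i < m} {i : ℕ | m ≤ i} := by
        rw [Set.disjoint_left]
        intro i hi hi'
        simp only [Set.mem_setOf_eq] at hi hi'
        omega
      have hind : Indep M₁ M₂ μ :=
        indep_iSup_of_disjoint (fun i => (hmeas i).comap_le) hindep.iIndep hdisj
      have hX1 : ∀ i, i < m → Measurable[M₁] (X i) := by
        intro i hi
        rw [measurable_iff_comap_le, hM₁]
        exact le_biSup (fun i => MeasurableSpace.comap (X i) inferInstance)
          (show i ∈ {i : ℕ | i < m} from hi)
      have hX2 : ∀ i, m ≤ i → Measurable[M₂] (X i) := by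
        intro i hi
        rw [measurable_iff_comap_le, hM₂]
        exact le_biSup (fun i => MeasurableSpace.comap (X i) inferInstance)
          (show i ∈ {i : ℕ | m ≤ i} from hi)
      have hAm : MeasurableSet[M₁] (A m) := by
        have hsum : Measurable[M₁] (fun ω => S m ω) :=
          Finset.measurable_sum _ fun i hi => hX1 i (Finset.mem_range.1 hi)
        exact hsum ((Set.to_countable {(L : ℤ)}).measurableSet)
      have hBm : MeasurableSet[M₂] (B m) := by
        have : B m = ⋂ k, ⋂ (_ : 1 ≤ k),
            (fun ω => ∑ i ∈ Finset.range k, X (m + i) ω) ⁻¹' {x : ℤ | 0 < x} := by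
          ext ω; simp [hB, Set.mem_iInter]
        rw [this]
        refine MeasurableSet.iInter fun k => MeasurableSet.iInter fun _ => ?_
        have hsum : Measurable[M₂] (fun ω => ∑ i ∈ Finset.range k, X (m + i) ω) :=
          Finset.measurable_sum _ fun i _ => hX2 (m + i) (Nat.le_add_right _ _)
        exact hsum ((Set.to_countable _).measurableSet)
      exact ((Indep_iff M₁ M₂ μ).1 hind) (A m) (B m) hAm hBm
    -- measurability of E m
    have hmeasS : ∀ n, Measurable (S n) :=
      fun n => Finset.measurable_sum _ fun i _ => hmeas i
    have hmeasE : ∀ m, MeasurableSet (E m) := by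
      intro m
      have : E m = (S m ⁻¹' {(L : ℤ)}) ∩
          ⋂ n, ⋂ (_ : m < n), (S n) ⁻¹' {x : ℤ | (L : ℤ) < x} := by
        ext ω; simp [hE, Set.mem_iInter]
      rw [this]
      exact ((hmeasS m) ((Set.to_countable _).measurableSet)).inter
        (MeasurableSet.iInter fun n => MeasurableSet.iInter fun _ =>
          (hmeasS n) ((Set.to_countable _).measurableSet))
    -- disjointness
    have hdisjE : Pairwise (Function.onFun Disjoint E) := by
      intro a b hab
      wlog h : a < b generalizing a b
      · exact (this hab.symm (by omega)).symm
      refine Set.disjoint_left.2 ?_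
      rintro ω ⟨_, ha2⟩ ⟨hb1, _⟩
      exact absurd hb1 (ne_of_gt (ha2 b h))
    -- union has full measure
    have hsub : {ω | Tendsto (fun n => S n ω) atTop atTop} ⊆ ⋃ m, E m := by
      intro ω ht
      simp only [Set.mem_setOf_eq] at ht
      obtain ⟨N, hN⟩ := Filter.eventually_atTop.1 (tendsto_atTop.1 ht ((L : ℤ) + 1))
      set F : Finset ℕ := (Finset.range (N + 1)).filter (fun n => S n ω ≤ (L : ℤ)) with hF
      have h0F : 0 ∈ F := by
        simp only [hF, Finset.mem_filter, Finset.mem_range]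
        refine ⟨by omega, ?_⟩
        simp [hS]
      set m := F.max' ⟨0, h0F⟩ with hm
      have hmF : m ∈ F := F.max'_mem ⟨0, h0F⟩
      have hm1 : S m ω ≤ (L : ℤ) := (Finset.mem_filter.1 hmF).2
      have hgt : ∀ n, m < n → (L : ℤ) < S n ω := by
        intro n hn
        by_contra hcon
        push_neg at hcon
        rcases lt_or_ge n (N + 1) with h | h
        · have hnF : n ∈ F := by
            simp only [hF, Finset.mem_filter, Finset.mem_range]
            exact ⟨h, hcon⟩
          have := Finset.le_max' F n hnF
          omega
        · have := hN n (by omega)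
          omega
      have hSm : S m ω = (L : ℤ) := by
        have hx := hgt (m + 1) (by omega)
        have hXle : X m ω ≤ 1 := (abs_le.1 (hbdd m ω)).2
        have hstep : S (m + 1) ω = S m ω + X m ω := by
          simp only [hS]
          exact Finset.sum_range_succ _ _
        omega
      exact Set.mem_iUnion.2 ⟨m, ⟨hSm, hgt⟩⟩
    have hae : ∀ᵐ ω ∂μ, ω ∈ ⋃ m, E m :=
      (drift_tendsto hmeas hindep hident hbdd hdrift).mono fun ω hω => hsub hω
    have hU : μ (⋃ m, E m) = 1 := by
      have h0 : μ ((⋃ m, E m)ᶜ) = 0 := ae_iff.1 hae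
      rw [← measure_univ (μ := μ)]
      exact measure_congr (ae_eq_univ.2 h0)
    have h1 : ∑' m : ℕ, μ (E m) = 1 := by
      rw [← measure_iUnion hdisjE hmeasE, hU]
    have h2 : ∀ m, μ (E m) = μ (A m) * α := fun m => by
      rw [hEAB m, hprod m, hαB m]
    rw [← ENNReal.tsum_mul_right, ← h1]
    exact tsum_congr fun m => (h2 m).symm
  have hα0 : α ≠ 0 := by
    intro h
    have hk0 := key 0
    rw [h, mul_zero] at hk0
    exact zero_ne_one hk0
  have hαtop : α ≠ ⊤ := by rw [hα]; exact measure_ne_top μ _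
  refine ⟨pos_iff_ne_zero.mpr hα0, fun L => ?_⟩
  have hk := key L
  calc ∑' m : ℕ, μ {ω | S m ω = (L:ℤ)}
      = (∑' m : ℕ, μ {ω | S m ω = (L:ℤ)}) * (α * α⁻¹) := by
        rw [ENNReal.mul_inv_cancel hα0 hαtop, mul_one]
    _ = ((∑' m : ℕ, μ {ω | S m ω = (L:ℤ)}) * α) * α⁻¹ := by rw [mul_assoc]
    _ = α⁻¹ := by rw [hk, one_mul]
end

section
/- Let (a_L)_{L≥0} and (π_k)_{k≥1} be nonnegative sequences with a_0 = 1, a_L ≤ 1 for all L, a_L ≥ α > 0 for all L ≥ 1, satisfying the renewal equation a_L = ∑_{k=1}^L π_k a_{L-k} for all L ≥ 1. Then ∑_{k≥1} π_k = 1 and ∑_{k≥1} k·π_k < ∞. -/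
open Finset Filter Topology

private lemma renewal_aux_sum_split (f : ℕ → ℝ) (N : ℕ) :
    ∑ i ∈ range (N + 1), f i = f 0 + ∑ i ∈ Icc 1 N, f i := by
  rw [Finset.sum_range_eq_add_Ico f (Nat.succ_pos N), Nat.succ_eq_add_one, Finset.Ico_add_one_right_eq_Icc]

theorem renewal_equation_probability_and_finite_mean
    (a π : ℕ → ℝ) (α : ℝ) (hα : 0 < α)
    (hπ0 : π 0 = 0) (hπnn : ∀ k, 0 ≤ π k)
    (ha0 : a 0 = 1) (hale : ∀ L, a L ≤ 1) (hage : ∀ L, 1 ≤ L → α ≤ a L)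
    (hren : ∀ L, 1 ≤ L → a L = ∑ k ∈ Finset.Icc 1 L, π k * a (L - k)) :
    (∑' k : ℕ, π k = 1) ∧ Summable (fun k : ℕ => (k : ℝ) * π k) := by
  have hα1 : α ≤ 1 := le_trans (hage 1 le_rfl) (hale 1)
  have haα : ∀ L, α ≤ a L := by
    intro L
    rcases Nat.eq_zero_or_pos L with h | h
    · rw [h, ha0]; exact hα1
    · exact hage L h
  have hann : ∀ L, 0 ≤ a L := fun L => le_trans hα.le (haα L)
  set P : ℕ → ℝ := fun N => ∑ k ∈ Icc 1 N, π k with hPdef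
  set A : ℕ → ℝ := fun N => ∑ L ∈ range (N + 1), a L with hAdef
  have hAr : ∀ N, A N = 1 + ∑ L ∈ Icc 1 N, a L := by
    intro N
    rw [hAdef]
    simpa [ha0] using renewal_aux_sum_split a N
  -- the double-sum identity
  have hsum1 : ∀ N, ∑ L ∈ Icc 1 N, a L = ∑ k ∈ Icc 1 N, π k * A (N - k) := by
    intro N
    have h1 : ∑ L ∈ Icc 1 N, a L = ∑ L ∈ Icc 1 N, ∑ k ∈ Icc 1 L, π k * a (L - k) :=
      Finset.sum_congr rfl fun L hL => hren L (mem_Icc.mp hL).1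
    have h2 : ∑ L ∈ Icc 1 N, ∑ k ∈ Icc 1 L, π k * a (L - k)
        = ∑ k ∈ Icc 1 N, ∑ L ∈ Icc k N, π k * a (L - k) := by
      refine Finset.sum_comm' ?_
      intro L k
      simp only [mem_Icc]
      omega
    have h3 : ∀ k ∈ Icc 1 N, ∑ L ∈ Icc k N, π k * a (L - k) = π k * A (N - k) := by
      intro k hk
      have hk' := mem_Icc.mp hk
      rw [← Finset.Ico_add_one_right_eq_Icc, Finset.sum_Ico_eq_sum_range]
      have he : N + 1 - k = (N - k) + 1 := by omega
      rw [he]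
      simp only [hAdef, Finset.mul_sum]
      exact Finset.sum_congr rfl fun i _ => by rw [Nat.add_sub_cancel_left]
    rw [h1, h2, Finset.sum_congr rfl h3]
  have hswap : ∀ N, ∑ L ∈ range (N + 1), a L * P (N - L)
      = ∑ k ∈ Icc 1 N, π k * A (N - k) := by
    intro N
    have h1 : ∑ L ∈ range (N + 1), a L * P (N - L)
        = ∑ L ∈ range (N + 1), ∑ k ∈ Icc 1 (N - L), a L * π k := by
      refine Finset.sum_congr rfl fun L _ => ?_
      rw [hPdef, Finset.mul_sum]
    have h2 : ∑ L ∈ range (N + 1), ∑ k ∈ Icc 1 (N - L), a L * π k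
        = ∑ k ∈ Icc 1 N, ∑ L ∈ range (N - k + 1), a L * π k := by
      refine Finset.sum_comm' ?_
      intro L k
      simp only [mem_range, mem_Icc]
      omega
    have h3 : ∀ k ∈ Icc 1 N, ∑ L ∈ range (N - k + 1), a L * π k = π k * A (N - k) := by
      intro k _
      simp only [hAdef]
      rw [← Finset.sum_mul, mul_comm]
    rw [h1, h2, Finset.sum_congr rfl h3]
  -- the star identity
  have hstar : ∀ N, ∑ L ∈ range (N + 1), a L * (1 - P (N - L)) = 1 := by
    intro N
    have : ∑ L ∈ range (N + 1), a L * (1 - P (N - L))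
        = A N - ∑ L ∈ range (N + 1), a L * P (N - L) := by
      rw [hAdef, ← Finset.sum_sub_distrib]
      exact Finset.sum_congr rfl fun L _ => by ring
    rw [this, hswap, ← hsum1, hAr]
    ring
  -- P is bounded
  have hPnn : ∀ N, 0 ≤ P N := fun N => Finset.sum_nonneg fun k _ => hπnn k
  have hPbound : ∀ M, P M ≤ 2 / α := by
    intro M
    have key := hsum1 (2 * M)
    have hL : ∑ L ∈ Icc 1 (2 * M), a L ≤ 2 * M := by
      calc ∑ L ∈ Icc 1 (2 * M), a L ≤ ∑ L ∈ Icc 1 (2 * M), (1 : ℝ) :=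
            Finset.sum_le_sum fun L _ => hale L
        _ = 2 * M := by simp [Nat.card_Icc]
    have hR : α * (M + 1) * P M ≤ ∑ k ∈ Icc 1 (2 * M), π k * A (2 * M - k) := by
      have hsub : Icc 1 M ⊆ Icc 1 (2 * M) := Finset.Icc_subset_Icc le_rfl (by omega)
      have h1 : ∑ k ∈ Icc 1 M, π k * (α * (M + 1))
          ≤ ∑ k ∈ Icc 1 M, π k * A (2 * M - k) := by
        refine Finset.sum_le_sum fun k hk => ?_
        have hk' := mem_Icc.mp hk
        refine mul_le_mul_of_nonneg_left ?_ (hπnn k)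
        have hcard : (M + 1 : ℝ) ≤ ((2 * M - k) + 1 : ℕ) := by
          have : M + 1 ≤ (2 * M - k) + 1 := by omega
          exact_mod_cast this
        calc α * (M + 1) ≤ α * ((2 * M - k) + 1 : ℕ) :=
              mul_le_mul_of_nonneg_left hcard hα.le
          _ ≤ A (2 * M - k) := by
              rw [hAdef]
              calc α * ((2 * M - k) + 1 : ℕ)
                  = ∑ _L ∈ range ((2 * M - k) + 1), α := by
                    simp [mul_comm]
                _ ≤ ∑ L ∈ range ((2 * M - k) + 1), a L :=
                    Finset.sum_le_sum fun L _ => haα L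
      have h2 : ∑ k ∈ Icc 1 M, π k * A (2 * M - k)
          ≤ ∑ k ∈ Icc 1 (2 * M), π k * A (2 * M - k) := by
        refine Finset.sum_le_sum_of_subset_of_nonneg hsub fun k _ _ => ?_
        refine mul_nonneg (hπnn k) ?_
        rw [hAdef]
        exact Finset.sum_nonneg fun L _ => hann L
      calc α * (M + 1) * P M = ∑ k ∈ Icc 1 M, π k * (α * (M + 1)) := by
            simp only [hPdef]
            rw [← Finset.sum_mul]; ring
        _ ≤ _ := h1.trans h2
    have hchain : α * (M + 1) * P M ≤ 2 * M := le_trans hR (key ▸ hL)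
    have hMpos : (0 : ℝ) < α * (M + 1) :=
      mul_pos hα (by positivity)
    rw [le_div_iff₀ hα]
    nlinarith [hchain, hPnn M, hα.le, (by positivity : (0:ℝ) < (M:ℝ) + 1)]
  have hAge : ∀ N : ℕ, α * ((N : ℝ) + 1) ≤ A N := by
    intro N
    simp only [hAdef]
    calc α * ((N : ℝ) + 1) = ∑ _L ∈ range (N + 1), α := by
          rw [Finset.sum_const, Finset.card_range]; push_cast; ring
      _ ≤ _ := Finset.sum_le_sum fun L _ => haα L
  have hPr : ∀ N, P N = ∑ i ∈ range (N + 1), π i := by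
    intro N
    simp only [hPdef]
    rw [renewal_aux_sum_split π N, hπ0, zero_add]
  have hπsum : Summable π := by
    refine summable_of_sum_range_le (c := 2 / α) hπnn fun n => ?_
    cases n with
    | zero => simpa using by positivity
    | succ m => rw [← hPr m]; exact hPbound m
  set S : ℝ := ∑' k, π k with hSdef
  have hPleS : ∀ N, P N ≤ S := by
    intro N
    simp only [hPdef, hSdef]
    exact Summable.sum_le_tsum _ (fun k _ => hπnn k) hπsum
  set τ : ℕ → ℝ := fun m => S - P m with hτdef
  have hτnn : ∀ m, 0 ≤ τ m := fun m => sub_nonneg.mpr (hPleS m)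
  have hPtend : Tendsto P atTop (𝓝 S) := by
    have h2 : Tendsto (fun N : ℕ => ∑ i ∈ range (N + 1), π i) atTop (𝓝 S) :=
      hπsum.hasSum.tendsto_sum_nat.comp (tendsto_add_atTop_nat 1)
    exact h2.congr fun N => (hPr N).symm
  have hτtend : Tendsto τ atTop (𝓝 0) := by
    have h := (tendsto_const_nhds (x := S) (f := (atTop : Filter ℕ))).sub hPtend
    simpa [hτdef] using h
  have hkey : ∀ N, ∑ L ∈ range (N + 1), a L * τ (N - L) = 1 + (S - 1) * A N := by
    intro N
    calc ∑ L ∈ range (N + 1), a L * τ (N - L)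
        = ∑ L ∈ range (N + 1), (a L * (1 - P (N - L)) + (S - 1) * a L) :=
          Finset.sum_congr rfl fun L _ => by simp only [hτdef]; ring
      _ = (∑ L ∈ range (N + 1), a L * (1 - P (N - L)))
            + (S - 1) * ∑ L ∈ range (N + 1), a L := by
          rw [Finset.sum_add_distrib, Finset.mul_sum]
      _ = 1 + (S - 1) * A N := by rw [hstar N]
  have hrefl : ∀ (f : ℕ → ℝ) (N : ℕ),
      ∑ L ∈ range (N + 1), f (N - L) = ∑ m ∈ range (N + 1), f m := by
    intro f N
    simpa using Finset.sum_range_reflect f (N + 1)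
  have hup : ∀ N, ∑ L ∈ range (N + 1), a L * τ (N - L) ≤ ∑ m ∈ range (N + 1), τ m := by
    intro N
    calc ∑ L ∈ range (N + 1), a L * τ (N - L) ≤ ∑ L ∈ range (N + 1), τ (N - L) :=
          Finset.sum_le_sum fun L _ => mul_le_of_le_one_left (hτnn (N - L)) (hale L)
      _ = ∑ m ∈ range (N + 1), τ m := hrefl τ N
  have hlow : ∀ N, α * ∑ m ∈ range (N + 1), τ m ≤ ∑ L ∈ range (N + 1), a L * τ (N - L) := by
    intro N
    rw [← hrefl τ N, Finset.mul_sum]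
    exact Finset.sum_le_sum fun L _ => mul_le_mul_of_nonneg_right (haα L) (hτnn (N - L))
  have hS1 : S = 1 := by
    rcases lt_trichotomy S 1 with hlt | heq | hgt
    · exfalso
      have hc : 0 < α * (1 - S) := mul_pos hα (by linarith)
      obtain ⟨n, hn⟩ := exists_nat_gt (1 / (α * (1 - S)))
      have h1 : ((n : ℝ) + 1) * (α * (1 - S)) ≤ 1 := by
        calc ((n : ℝ) + 1) * (α * (1 - S)) = ∑ _L ∈ range (n + 1), α * (1 - S) := by
              rw [Finset.sum_const, Finset.card_range]; push_cast; ring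
          _ ≤ ∑ L ∈ range (n + 1), a L * (1 - P (n - L)) := by
              refine Finset.sum_le_sum fun L _ => ?_
              have hps := hPleS (n - L)
              have hpn := hPnn (n - L)
              nlinarith [haα L, hann L, hα]
          _ = 1 := hstar n
      rw [div_lt_iff₀ hc] at hn
      nlinarith [hc]
    · exact heq
    · exfalso
      have hεpos : 0 < (S - 1) * α / 2 := by
        have : 0 < S - 1 := by linarith
        positivity
      set ε := (S - 1) * α / 2 with hεdef
      obtain ⟨M, hM⟩ := (Filter.eventually_atTop).mp (hτtend.eventually (gt_mem_nhds hεpos))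
      set C := ∑ m ∈ range M, τ m with hCdef
      have hC0 : 0 ≤ C := Finset.sum_nonneg fun m _ => hτnn m
      obtain ⟨n, hn⟩ := exists_nat_gt (C / ε)
      set N := max n M with hNdef
      have hNM : M ≤ N := le_max_right n M
      have hNn : (n : ℝ) ≤ N := by exact_mod_cast le_max_left n M
      have hsplit : ∑ m ∈ range (N + 1), τ m ≤ C + ((N : ℝ) + 1) * ε := by
        have hle : M ≤ N + 1 := by omega
        rw [← Finset.sum_range_add_sum_Ico τ hle, ← hCdef]
        have : ∑ m ∈ Ico M (N + 1), τ m ≤ ∑ m ∈ Ico M (N + 1), ε :=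
          Finset.sum_le_sum fun m hm => (hM m (Finset.mem_Ico.mp hm).1).le
        have hcard : ∑ m ∈ Ico M (N + 1), ε = ((N + 1 - M : ℕ) : ℝ) * ε := by
          rw [Finset.sum_const, Nat.card_Ico]; simp [nsmul_eq_mul]
        have hNc : ((N + 1 - M : ℕ) : ℝ) ≤ (N : ℝ) + 1 := by
          have : (N + 1 - M : ℕ) ≤ N + 1 := by omega
          exact_mod_cast this
        have h2 : ∑ m ∈ Ico M (N + 1), τ m ≤ ((N : ℝ) + 1) * ε := by
          refine le_trans this ?_
          rw [hcard]
          exact mul_le_mul_of_nonneg_right hNc hεpos.le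
        linarith
      have hbig : 1 + (S - 1) * (α * ((N : ℝ) + 1)) ≤ C + ((N : ℝ) + 1) * ε := by
        have h1 := hkey N
        have h2 := hup N
        have h3 := hAge N
        have hS1' : 0 < S - 1 := by linarith
        nlinarith [h1, h2, h3, hsplit]
      rw [div_lt_iff₀ hεpos] at hn
      have hee : (S - 1) * α = 2 * ε := by rw [hεdef]; ring
      nlinarith [hbig, hεpos, hNn, hn]
  refine ⟨hS1, ?_⟩
  have hτbound : ∀ n : ℕ, ∑ m ∈ range n, τ m ≤ 1 / α := by
    intro n
    cases n with
    | zero => simp; positivity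
    | succ N =>
        have h1 := hlow N
        have h2 := hkey N
        rw [hS1] at h2
        simp at h2
        rw [le_div_iff₀ hα]
        nlinarith [h1, h2]
  refine summable_of_sum_range_le (fun k => mul_nonneg (Nat.cast_nonneg k) (hπnn k))
    (fun n => ?_) (c := 1 / α)
  have hIoo : ∀ m, ∑ k ∈ Ioo m n, π k ≤ τ m := by
    intro m
    have hdisj : Disjoint (Icc 1 m) (Ioo m n) := by
      rw [Finset.disjoint_left]
      intro x hx hx'
      simp only [mem_Icc] at hx
      simp only [mem_Ioo] at hx'
      omega
    have hle : ∑ k ∈ Icc 1 m ∪ Ioo m n, π k ≤ S :=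
      Summable.sum_le_tsum _ (fun k _ => hπnn k) hπsum
    rw [Finset.sum_union hdisj] at hle
    simp only [hτdef, hPdef]
    linarith
  have hswap2 : ∑ k ∈ range n, (k : ℝ) * π k = ∑ m ∈ range n, ∑ k ∈ Ioo m n, π k := by
    have h1 : ∀ k ∈ range n, (k : ℝ) * π k = ∑ _m ∈ range k, π k := by
      intro k _
      rw [Finset.sum_const, Finset.card_range, nsmul_eq_mul]
    rw [Finset.sum_congr rfl h1]
    refine Finset.sum_comm' ?_
    intro k m
    simp only [mem_range, mem_Ioo]
    omega
  calc ∑ k ∈ range n, (k : ℝ) * π k = ∑ m ∈ range n, ∑ k ∈ Ioo m n, π k := hswap2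
    _ ≤ ∑ m ∈ range n, τ m := Finset.sum_le_sum fun m _ => hIoo m
    _ ≤ 1 / α := hτbound n
end
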